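/- Let M = [u : X → T] with X = ℤ, T a commutative group, u the trivial homomorphism, and Γ = T with a nontrivial homomorphism λ : T → Γ available. Define δ : ℤ × T → Γ by δ(n,g) = λ(g)ⁿ. Then δ satisfies the cocycle condition δ(n+m, g) = δ(n, u(m)g)·δ(m,g), but there is no group homomorphism α : ℤ → Γ with δ(n,g) = α(n) for all n, g (since λ is nonconstant). Hence the class of δ lies in the kernel of ι* but not in the image of β*, i.e. the sequence Pic(X[1]) → Pic(M) → Pic(T) is not exact. -/

import Mathlib

/-- With X = ℤ, u trivial and λ : T → Γ a nonconstant
homomorphism, δ(n,g) = λ(g)ⁿ is a cocycle which is not of the form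
(n,g) ↦ α(n); hence Pic(X[1]) → Pic(M) → Pic(T) is not exact. -/
theorem stmt_12 {T Γ : Type*} [CommGroup T] [CommGroup Γ]
    (u : ℤ → T) (hu : ∀ n, u n = 1)
    (lam : T → Γ) (hlam : ∀ g g', lam (g * g') = lam g * lam g')
    (hnontriv : ∃ g, lam g ≠ 1)
    (δ : ℤ → T → Γ) (hδ : ∀ n g, δ n g = (lam g) ^ n) :
    (∀ n m g, δ (n + m) g = δ n (u m * g) * δ m g) ∧
    ¬ ∃ α : ℤ → Γ, ∀ n g, δ n g = α n := by
  have hlam1 : lam 1 = 1 := by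
    have := hlam 1 1
    rw [one_mul] at this
    exact right_eq_mul.mp this
  constructor
  · intro n m g
    rw [hδ, hδ, hδ, hu, one_mul, zpow_add]
  · rintro ⟨α, hα⟩
    obtain ⟨g, hg⟩ := hnontriv
    have h1 : δ 1 g = δ 1 1 := by rw [hα 1 g, hα 1 1]
    rw [hδ, hδ, hlam1, zpow_one, zpow_one] at h1
    exact hg h1
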